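/- Let p be a polynomial of degree n over ℂ with p(0) = 1 that has no zeros in the open unit disk. Then there exists an n × n complex matrix K with operator norm at most 1 such that p(z) = det(I - z•K) for all z ∈ ℂ. -/

import Mathlib

open scoped Matrix.Norms.L2Operator
open Polynomial Matrix

lemma diag_norm_le {n : ℕ} (d : Fin n → ℂ) (hd : ∀ i, ‖d i‖ ≤ 1) :
    ‖Matrix.diagonal d‖ ≤ 1 := by
  rw [Matrix.l2_opNorm_def]
  apply ContinuousLinearMap.opNorm_le_bound _ zero_le_one
  intro x
  rw [one_mul]
  simp only [LinearEquiv.trans_apply, LinearMap.coe_toContinuousLinearMap',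
    Matrix.toEuclideanLin_apply]
  rw [EuclideanSpace.norm_eq, EuclideanSpace.norm_eq]
  apply Real.sqrt_le_sqrt
  apply Finset.sum_le_sum
  intro i _
  simp only [WithLp.ofLp_toLp, Matrix.mulVec_diagonal, norm_mul]
  rw [mul_pow]
  exact mul_le_of_le_one_left (sq_nonneg _) (by nlinarith [hd i, norm_nonneg (d i)])

theorem stmt_1 (n : ℕ) (p : Polynomial ℂ) (hdeg : p.natDegree = n)
    (h0 : p.eval 0 = 1) (hstable : ∀ z : ℂ, ‖z‖ < 1 → p.eval z ≠ 0) :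
    ∃ K : Matrix (Fin n) (Fin n) ℂ, ‖K‖ ≤ 1 ∧
      ∀ z : ℂ, p.eval z = (1 - z • K).det := by
  have hp0 : p ≠ 0 := fun h => by simp [h] at h0
  have hsplit : p.Splits := IsAlgClosed.splits p
  have hcard : p.roots.card = n := by
    rw [← hdeg]; exact Polynomial.splits_iff_card_roots.mp hsplit
  set l := p.roots.toList with hl
  have hlen : l.length = n := by rw [Multiset.length_toList, hcard]
  have hmem : ∀ r ∈ p.roots, 1 ≤ ‖r‖ := by
    intro r hr
    by_contra h
    exact hstable r (not_le.mp h) (Polynomial.isRoot_of_mem_roots hr)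
  set d : Fin n → ℂ := fun i => (l.get ⟨i.1, by omega⟩)⁻¹ with hd
  have hprod : ∀ g : ℂ → ℂ, (∏ i : Fin n, g (l.get ⟨i.1, by omega⟩)) = (p.roots.map g).prod := by
    intro g
    have h2 : (Multiset.map g p.roots).prod = (List.map g l).prod := by
      rw [← Multiset.coe_toList p.roots, ← hl, Multiset.map_coe, Multiset.prod_coe]
    rw [h2, ← Fin.prod_univ_fun_getElem l g]
    exact Fintype.prod_equiv (finCongr hlen.symm) _ _ (fun i => rfl)
  refine ⟨Matrix.diagonal d, diag_norm_le d ?_, ?_⟩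
  · intro i
    have hri : l.get ⟨i.1, by omega⟩ ∈ p.roots :=
      Multiset.mem_toList.mp (List.get_mem _ _)
    have := hmem _ hri
    rw [hd]
    simp only [norm_inv]
    exact inv_le_one_of_one_le₀ this
  · intro z
    have hdiag : (1 : Matrix (Fin n) (Fin n) ℂ) - z • Matrix.diagonal d
        = Matrix.diagonal (fun i => 1 - z * d i) := by
      ext i j
      by_cases h : i = j <;> simp [Matrix.one_apply, Matrix.diagonal, h]
    rw [hdiag, Matrix.det_diagonal]
    set c := p.leadingCoeff with hc
    have hev : ∀ w : ℂ, p.eval w = c * (p.roots.map (fun a => w - a)).prod := by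
      intro w
      conv_lhs => rw [hsplit.eq_prod_roots]
      rw [Polynomial.eval_mul, Polynomial.eval_C, Polynomial.eval_multiset_prod,
        Multiset.map_map]
      simp [Function.comp, ← hc]
    have h1 : 1 = c * (p.roots.map (fun a => -a)).prod := by
      have := hev 0; simp only [zero_sub] at this; rw [← h0, this]
    have hgoal : (∏ i : Fin n, (1 - z * d i))
        = (p.roots.map (fun a => 1 - z * a⁻¹)).prod := by
      rw [← hprod (fun a => 1 - z * a⁻¹)]
    rw [hgoal, hev z]
    have hne : ∀ a ∈ p.roots, a ≠ 0 := by
      intro a ha h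
      have := hmem a ha; rw [h, norm_zero] at this; linarith
    calc c * (p.roots.map (fun a => z - a)).prod
        = (c * (p.roots.map (fun a => -a)).prod) * (p.roots.map (fun a => 1 - z * a⁻¹)).prod := by
          have hmap : Multiset.map (fun a => z - a) p.roots
              = Multiset.map (fun a => -a * (1 - z * a⁻¹)) p.roots :=
            Multiset.map_congr rfl (fun a ha => by
              have h := hne a ha
              field_simp
              ring)
          rw [mul_assoc, ← Multiset.prod_map_mul, ← hmap]
      _ = (p.roots.map (fun a => 1 - z * a⁻¹)).prod := by rw [← h1, one_mul]
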